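/- Let n ≥ 2 and define for m ∈ ℤ^{n−1} and i ∈ ℤ the unit cubes Q_{i,m} = (i−1, i] × ∏_{ν}(m_ν − 1, m_ν]. Define the family of forbidden cubes F_{i,m} = {Q_{i',m'} : i' < i, |m − m'| < 4√(i − i') + 4√(n−1)} and the set D_{i,m} = ⋃_{x' ∈ Q_m} {(y₁, y') : y₁ < i − 1, |y' − x'| < √(i − y₁) + √(n−1)}. Then D_{i,m} ⊆ ⋃_{Q ∈ F_{i,m}} Q. -/

import Mathlib

open Real Finset

theorem stmt12 (d : ℕ) (hd : 0 < d) (i : ℤ) (m : Fin d → ℤ) :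
    (⋃ x' ∈ {x' : EuclideanSpace ℝ (Fin d) | ∀ ν, (m ν : ℝ) - 1 < x' ν ∧ x' ν ≤ m ν},
        {p : ℝ × EuclideanSpace ℝ (Fin d) |
          p.1 < (i : ℝ) - 1 ∧ ‖p.2 - x'‖ < Real.sqrt ((i : ℝ) - p.1) + Real.sqrt d}) ⊆
      ⋃ (i' : ℤ) (_ : i' < i) (m' : Fin d → ℤ)
        (_ : Real.sqrt (∑ ν, ((m ν : ℝ) - m' ν) ^ 2) <
              4 * Real.sqrt ((i : ℝ) - i') + 4 * Real.sqrt d),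
        {p : ℝ × EuclideanSpace ℝ (Fin d) |
          ((i' : ℝ) - 1 < p.1 ∧ p.1 ≤ (i' : ℝ)) ∧
            ∀ ν, (m' ν : ℝ) - 1 < p.2 ν ∧ p.2 ν ≤ m' ν} := by
  intro p hp
  simp only [Set.mem_iUnion, Set.mem_setOf_eq] at hp ⊢
  obtain ⟨x', hx', hp1, hp2⟩ := hp
  have hii : ⌈p.1⌉ < i := by
    have : ⌈p.1⌉ ≤ i - 1 := Int.ceil_le.mpr (by push_cast; linarith)
    omega
  refine ⟨⌈p.1⌉, hii, fun ν => ⌈p.2 ν⌉, ?_, ?_, fun ν => ⟨?_, Int.le_ceil _⟩⟩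
  · -- the distance bound
    have hd1 : (1 : ℝ) ≤ d := by exact_mod_cast hd
    have hsd : (0 : ℝ) < Real.sqrt d := Real.sqrt_pos.mpr (by linarith)
    -- componentwise bound
    set u : EuclideanSpace ℝ (Fin d) := WithLp.toLp 2 (fun ν => |p.2 ν - x' ν|) with hu_def
    set w : EuclideanSpace ℝ (Fin d) := WithLp.toLp 2 (fun _ => (1 : ℝ)) with hw_def
    have hcomp : ∀ ν ∈ Finset.univ, ((m ν : ℝ) - (⌈p.2 ν⌉ : ℤ)) ^ 2 ≤ (u ν + w ν) ^ 2 := by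
      intro ν _
      have h1 := (hx' ν).1
      have h2 := (hx' ν).2
      have h3 : (p.2 ν : ℝ) ≤ (⌈p.2 ν⌉ : ℤ) := Int.le_ceil _
      have h4 : ((⌈p.2 ν⌉ : ℤ) : ℝ) < p.2 ν + 1 := Int.ceil_lt_add_one _
      have h6 := le_abs_self (p.2 ν - x' ν)
      have h7 := neg_abs_le (p.2 ν - x' ν)
      have hu : u ν = |p.2 ν - x' ν| := rfl
      have hw : w ν = 1 := rfl
      rw [hu, hw]
      nlinarith [abs_nonneg (p.2 ν - x' ν)]
    have hsum : ∑ ν, ((m ν : ℝ) - (⌈p.2 ν⌉ : ℤ)) ^ 2 ≤ ∑ ν, (u ν + w ν) ^ 2 :=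
      Finset.sum_le_sum hcomp
    have h1 : Real.sqrt (∑ ν, ((m ν : ℝ) - (⌈p.2 ν⌉ : ℤ)) ^ 2) ≤ ‖u + w‖ := by
      rw [EuclideanSpace.norm_eq]
      refine Real.sqrt_le_sqrt (le_trans hsum (le_of_eq ?_))
      refine Finset.sum_congr rfl fun ν _ => ?_
      rw [PiLp.add_apply, Real.norm_eq_abs, sq_abs]
    have hun : ‖u‖ = ‖p.2 - x'‖ := by
      rw [EuclideanSpace.norm_eq, EuclideanSpace.norm_eq]
      congr 1
      refine Finset.sum_congr rfl fun ν _ => ?_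
      rw [PiLp.sub_apply, Real.norm_eq_abs, Real.norm_eq_abs]
      simp [hu_def, abs_abs]
    have hwn : ‖w‖ = Real.sqrt d := by
      rw [EuclideanSpace.norm_eq]
      simp [hw_def]
    have h2 : ‖u + w‖ ≤ ‖p.2 - x'‖ + Real.sqrt d := by
      calc ‖u + w‖ ≤ ‖u‖ + ‖w‖ := norm_add_le _ _
        _ = ‖p.2 - x'‖ + Real.sqrt d := by rw [hun, hwn]
    -- bound sqrt(i - p.1) by 2 sqrt(i - ⌈p.1⌉)
    have hceil1 : ((⌈p.1⌉ : ℤ) : ℝ) ≤ (i : ℝ) - 1 := by exact_mod_cast (by omega : ⌈p.1⌉ ≤ i - 1)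
    have hceil2 : ((⌈p.1⌉ : ℤ) : ℝ) - 1 < p.1 := by
      have := Int.ceil_lt_add_one p.1; linarith
    have h3 : Real.sqrt ((i : ℝ) - p.1) ≤ 2 * Real.sqrt ((i : ℝ) - ⌈p.1⌉) := by
      have ha : (i : ℝ) - p.1 ≤ 4 * ((i : ℝ) - ⌈p.1⌉) := by linarith
      calc Real.sqrt ((i : ℝ) - p.1) ≤ Real.sqrt (4 * ((i : ℝ) - ⌈p.1⌉)) :=
            Real.sqrt_le_sqrt ha
        _ = 2 * Real.sqrt ((i : ℝ) - ⌈p.1⌉) := by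
            rw [show (4 : ℝ) * ((i : ℝ) - ⌈p.1⌉) = (2:ℝ)^2 * ((i : ℝ) - ⌈p.1⌉) by ring,
              Real.sqrt_mul (by positivity), Real.sqrt_sq (by norm_num)]
    have hsq : (0 : ℝ) ≤ Real.sqrt ((i : ℝ) - ⌈p.1⌉) := Real.sqrt_nonneg _
    push_cast
    push_cast at h1
    calc Real.sqrt (∑ ν, ((m ν : ℝ) - (⌈p.2 ν⌉ : ℤ)) ^ 2)
        ≤ ‖u + w‖ := h1
      _ ≤ ‖p.2 - x'‖ + Real.sqrt d := h2
      _ < (Real.sqrt ((i : ℝ) - p.1) + Real.sqrt d) + Real.sqrt d := by linarith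
      _ < 4 * Real.sqrt ((i : ℝ) - ⌈p.1⌉) + 4 * Real.sqrt d := by linarith
  · have := Int.ceil_lt_add_one p.1; constructor <;> [linarith; exact Int.le_ceil _]
  · have := Int.ceil_lt_add_one (p.2 ν); linarith
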